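/- Let p > 1 and let F : [0,∞) → [0,∞) be a C² convex function with F(0) = 0 and F'(0) = 0, and define Φ on symmetric n×n matrices by Φ(B) = F(|B|). If the Hessian of Φ satisfies γ₁(1+|B|²)^((p-2)/2)|C|² ≤ Σ (∂²Φ/∂B_{jk}∂B_{lm})(B) C_{jk} C_{lm} for all symmetric B, C, then the induced stress S(B) = ∂Φ/∂B = F'(|B|) B/|B| satisfies the coercivity estimate Σ_{i,j} S_{ij}(B) B_{ij} ≥ c₁ γ₁ (1+|B|²)^((p-2)/2) |B|² for all symmetric matrices B, with a constant c₁ > 0 independent of γ₁. -/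

import Mathlib

open Real

/-- Frobenius norm of an `n × n` real matrix (represented as a function). -/
noncomputable def frob {n : ℕ} (B : Fin n → Fin n → ℝ) : ℝ :=
  Real.sqrt (∑ i, ∑ j, (B i j) ^ 2)

/-- The stress tensor `S(B) = F'(|B|) B / |B|`, extended by `S(0) = 0`. -/
noncomputable def stress {n : ℕ} (F : ℝ → ℝ) (B : Fin n → Fin n → ℝ) : Fin n → Fin n → ℝ :=
  if B = 0 then 0 else (deriv F (frob B) / frob B) • B

lemma qsum_nonneg {n : ℕ} (B : Fin n → Fin n → ℝ) : 0 ≤ ∑ i, ∑ j, (B i j)^2 := by positivity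

lemma frob_nonneg {n : ℕ} (B : Fin n → Fin n → ℝ) : 0 ≤ frob B := Real.sqrt_nonneg _

lemma frob_sq {n : ℕ} (B : Fin n → Fin n → ℝ) : frob B ^ 2 = ∑ i, ∑ j, (B i j)^2 :=
  Real.sq_sqrt (qsum_nonneg B)

lemma qsum_pos {n : ℕ} {B : Fin n → Fin n → ℝ} (hB : B ≠ 0) : 0 < ∑ i, ∑ j, (B i j)^2 := by
  rcases (qsum_nonneg B).lt_or_eq with h | h
  · exact h
  · exfalso; apply hB; funext i j
    have h2 : ∀ i ∈ Finset.univ, ∑ j, (B i j)^2 = 0 := by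
      intro i _
      have := (Finset.sum_eq_zero_iff_of_nonneg (fun i _ => by positivity)).mp h.symm
      exact this i (Finset.mem_univ i)
    have := (Finset.sum_eq_zero_iff_of_nonneg (fun j _ => by positivity)).mp
      (h2 i (Finset.mem_univ i)) j (Finset.mem_univ j)
    have : B i j = 0 := by nlinarith [this]
    simpa using this

lemma frob_pos {n : ℕ} {B : Fin n → Fin n → ℝ} (hB : B ≠ 0) : 0 < frob B :=
  Real.sqrt_pos.mpr (qsum_pos hB)

lemma contDiff_qsum {n : ℕ} : ContDiff ℝ 2 (fun B : Fin n → Fin n → ℝ => ∑ i, ∑ j, (B i j)^2) := by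
  apply ContDiff.sum; intro i _; apply ContDiff.sum; intro j _
  exact ((contDiff_apply ℝ ℝ j).comp (contDiff_apply ℝ (Fin n → ℝ) i)).pow 2

lemma contDiffAt_frob {n : ℕ} {B : Fin n → Fin n → ℝ} (hB : B ≠ 0) :
    ContDiffAt ℝ 2 (frob (n := n)) B := by
  have h1 : ContDiffAt ℝ 2 Real.sqrt (∑ i, ∑ j, (B i j)^2) :=
    Real.contDiffAt_sqrt (ne_of_gt (qsum_pos hB))
  exact h1.comp B contDiff_qsum.contDiffAt

lemma frob_smul {n : ℕ} (t : ℝ) (B : Fin n → Fin n → ℝ) : frob (t • B) = |t| * frob B := by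
  unfold frob
  have : ∀ i j, ((t • B) i j)^2 = t^2 * (B i j)^2 := by intro i j; simp [mul_pow]
  simp only [this, ← Finset.mul_sum]
  rw [Real.sqrt_mul (by positivity), Real.sqrt_sq_eq_abs]

lemma keyF (p γ₁ : ℝ) (hp : 1 < p) (hγ : 0 < γ₁) (F : ℝ → ℝ) (hF : ContDiff ℝ 2 F)
    (hF0 : deriv F 0 = 0)
    (hdd : ∀ s, 0 < s → γ₁ * (1 + s^2) ^ ((p-2)/2) ≤ deriv (deriv F) s) :
    ∀ r, 0 ≤ r → (1/p) * γ₁ * (1 + r^2) ^ ((p-2)/2) * r ≤ deriv F r := by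
  set α := (p-2)/2 with hα
  have hp0 : 0 < p := lt_trans one_pos hp
  -- F's derivative is C¹
  have hF2 : ContDiff ℝ (1+1 : ℕ) F := by norm_num; exact hF
  have hdF : ContDiff ℝ 1 (deriv F) := by
    rw [show ((1+1 : ℕ) : WithTop ℕ∞) = (1 : WithTop ℕ∞) + 1 by norm_num] at hF2
    exact (contDiff_succ_iff_deriv.mp hF2).2.2
  have hdFdiff : Differentiable ℝ (deriv F) := hdF.differentiable (by norm_num)
  -- the comparison function
  set G : ℝ → ℝ := fun x => x * (1 + x^2) ^ α with hG
  have hGd : ∀ x : ℝ, HasDerivAt G (1 * (1+x^2)^α + x * (α * (1+x^2)^(α-1) * (2*x))) x := by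
    intro x
    have h1 : HasDerivAt (fun x : ℝ => 1 + x^2) (2*x) x := by
      simpa using ((hasDerivAt_pow 2 x).const_add 1)
    have h2 : HasDerivAt (fun y : ℝ => y ^ α) (α * (1+x^2)^(α-1)) (1+x^2) :=
      Real.hasDerivAt_rpow_const (Or.inl (by positivity))
    have h3 := h2.comp x h1
    exact (hasDerivAt_id x).mul h3
  set ψ : ℝ → ℝ := fun x => deriv F x - (γ₁/p) * G x with hψ
  have hψd : ∀ x : ℝ, HasDerivAt ψ
      (deriv (deriv F) x - (γ₁/p) * (1 * (1+x^2)^α + x * (α * (1+x^2)^(α-1) * (2*x)))) x := by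
    intro x
    exact ((hdFdiff x).hasDerivAt).sub ((hGd x).const_mul (γ₁/p))
  have hψderiv_nonneg : ∀ x : ℝ, 0 < x → 0 ≤ deriv ψ x := by
    intro x hx
    rw [(hψd x).deriv]
    have hu : (0:ℝ) < 1 + x^2 := by positivity
    have hA : (0:ℝ) < (1+x^2)^α := Real.rpow_pos_of_pos hu α
    have hsub : (1+x^2)^(α-1) = (1+x^2)^α / (1+x^2) := Real.rpow_sub_one (ne_of_gt hu) α
    have hmain : (γ₁/p) * (1 * (1+x^2)^α + x * (α * (1+x^2)^(α-1) * (2*x))) ≤ γ₁ * (1+x^2)^α := by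
      rw [hsub]
      rw [div_mul_eq_mul_div, div_le_iff₀ hp0]
      have h2α : 2 * α = p - 2 := by rw [hα]; ring
      have expand : γ₁ * (1 * (1+x^2)^α + x * (α * ((1+x^2)^α / (1+x^2)) * (2*x)))
          = γ₁ * (1+x^2)^α * (1 + (2*α) * x^2 / (1+x^2)) := by ring
      rw [expand, h2α]
      have key : 1 + (p-2) * x^2 / (1+x^2) ≤ p := by
        have : (p-2)*x^2/(1+x^2) ≤ p-1 := by
          rw [div_le_iff₀ hu]; nlinarith [sq_nonneg x]
        linarith
      calc γ₁ * (1+x^2)^α * (1 + (p-2) * x^2 / (1+x^2))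
          ≤ γ₁ * (1+x^2)^α * p := by
            apply mul_le_mul_of_nonneg_left key (by positivity)
        _ = γ₁ * (1+x^2)^α * p := rfl
    have := hdd x hx
    linarith
  intro r hr
  rcases hr.lt_or_eq with hr | hr
  · -- r > 0 : use monotonicity of ψ on [0, r]
    have hcont : ContinuousOn ψ (Set.Icc 0 r) := by
      apply Continuous.continuousOn
      apply Continuous.sub (hF.continuous_deriv (by norm_num))
      apply Continuous.mul continuous_const
      exact continuous_id.mul ((continuous_const.add (continuous_pow 2)).rpow_const
        (fun x => Or.inl (by show (1:ℝ) + x^2 ≠ 0; positivity)))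
    have hmono : MonotoneOn ψ (Set.Icc 0 r) := by
      apply monotoneOn_of_deriv_nonneg (convex_Icc 0 r) hcont
      · intro x hx
        exact ((hψd x).differentiableAt).differentiableWithinAt
      · intro x hx
        rw [interior_Icc] at hx
        exact hψderiv_nonneg x hx.1
    have h0r := hmono (Set.left_mem_Icc.mpr (le_of_lt hr))
      (Set.right_mem_Icc.mpr (le_of_lt hr)) (le_of_lt hr)
    have hψ0 : ψ 0 = 0 := by simp [hψ, hG, hF0]
    rw [hψ0] at h0r
    simp only [hψ] at h0r
    have : (γ₁/p) * G r ≤ deriv F r := by linarith [h0r]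
    calc (1/p) * γ₁ * (1 + r^2) ^ α * r = (γ₁/p) * G r := by rw [hG]; ring
      _ ≤ deriv F r := this
  · subst hr
    simp [hF0]

lemma bridge {n : ℕ} (hn : 0 < n) (p γ₁ : ℝ) (F : ℝ → ℝ)
    (Φ : (Fin n → Fin n → ℝ) → ℝ)
    (hF : ContDiff ℝ 2 F) (hΦ : ∀ B, Φ B = F (frob B))
    (hyp : ∀ B C : Fin n → Fin n → ℝ, (∀ i j, B i j = B j i) → (∀ i j, C i j = C j i) →
      γ₁ * (1 + frob B ^ 2) ^ ((p - 2) / 2) * frob C ^ 2 ≤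
        fderiv ℝ (fun A => fderiv ℝ Φ A C) B C) :
    ∀ s : ℝ, 0 < s → γ₁ * (1 + s^2) ^ ((p-2)/2) ≤ deriv (deriv F) s := by
  intro s hs
  set z : Fin n := ⟨0, hn⟩ with hz
  set f : Fin n → ℝ := fun i => if i = z then 1 else 0 with hfdef
  set E : Fin n → Fin n → ℝ := fun i j => f i * f j with hEdef
  have hEsymm : ∀ i j, E i j = E j i := fun i j => mul_comm _ _
  have hfsq : ∑ i, (f i)^2 = 1 := by
    simp [hfdef, apply_ite (fun x : ℝ => x^2)]
  have hfrobE : frob E = 1 := by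
    unfold frob
    have : ∀ i j : Fin n, (E i j)^2 = (f i)^2 * (f j)^2 := by
      intro i j; rw [hEdef]; ring
    simp only [this, ← Finset.mul_sum, hfsq, mul_one]
    simpa using Real.sqrt_one
  have hΦfun : Φ = fun A => F (frob A) := funext hΦ
  have hΦC2 : ∀ A : Fin n → Fin n → ℝ, A ≠ 0 → ContDiffAt ℝ 2 Φ A := by
    intro A hA
    rw [hΦfun]
    exact ContDiffAt.comp A hF.contDiffAt (contDiffAt_frob hA)
  have hsE_ne : ∀ u : ℝ, u ≠ 0 → u • E ≠ 0 := by
    intro u hu h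
    have := congrFun (congrFun h z) z
    simp [hEdef, hfdef] at this
    exact hu this
  have hsmul : ∀ u : ℝ, HasDerivAt (fun v : ℝ => v • E) E u := by
    intro u
    simpa using (hasDerivAt_id u).smul_const E
  -- first derivative along the line
  have hline1 : ∀ u : ℝ, u ≠ 0 → HasDerivAt (fun v => Φ (v • E)) (fderiv ℝ Φ (u • E) E) u := by
    intro u hu
    have hd : DifferentiableAt ℝ Φ (u • E) :=
      ((hΦC2 _ (hsE_ne u hu)).differentiableAt (by norm_num))
    exact hd.hasFDerivAt.comp_hasDerivAt u (hsmul u)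
  -- Φ(u•E) = F u for u > 0
  have hΦE : ∀ u : ℝ, 0 < u → Φ (u • E) = F u := by
    intro u hu
    rw [hΦ, frob_smul, hfrobE, abs_of_pos hu, mul_one]
  have heq : ∀ u : ℝ, 0 < u → deriv F u = fderiv ℝ Φ (u • E) E := by
    intro u hu
    have hev : (fun v => Φ (v • E)) =ᶠ[nhds u] F := by
      filter_upwards [eventually_gt_nhds hu] with v hv
      exact hΦE v hv
    rw [← hev.deriv_eq, (hline1 u (ne_of_gt hu)).deriv]
  -- second derivative along the line
  have hg : DifferentiableAt ℝ (fun A => fderiv ℝ Φ A E) (s • E) := by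
    have h1 : ContDiffAt ℝ 1 (fderiv ℝ Φ) (s • E) :=
      (hΦC2 _ (hsE_ne s (ne_of_gt hs))).fderiv_right (by norm_num)
    exact (h1.differentiableAt (by norm_num)).clm_apply (differentiableAt_const E)
  have hline2 : HasDerivAt (fun v => fderiv ℝ Φ (v • E) E)
      (fderiv ℝ (fun A => fderiv ℝ Φ A E) (s • E) E) s :=
    by have := hg.hasFDerivAt.comp_hasDerivAt s (hsmul s); exact this
  have hev2 : deriv F =ᶠ[nhds s] fun v => fderiv ℝ Φ (v • E) E := by
    filter_upwards [eventually_gt_nhds hs] with v hv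
    exact heq v hv
  have hdd : deriv (deriv F) s = fderiv ℝ (fun A => fderiv ℝ Φ A E) (s • E) E := by
    rw [hev2.deriv_eq, hline2.deriv]
  rw [hdd]
  have hsEsymm : ∀ i j, (s • E) i j = (s • E) j i := by
    intro i j; simp [hEsymm i j]
  have := hyp (s • E) E hsEsymm hEsymm
  rw [frob_smul, hfrobE, mul_one, abs_of_pos hs] at this
  simpa using this

theorem stmt0 (n : ℕ) (p : ℝ) (hp : 1 < p) :
    ∃ c₁ > (0 : ℝ), ∀ γ₁ : ℝ, 0 < γ₁ →
      ∀ (F : ℝ → ℝ) (Φ : (Fin n → Fin n → ℝ) → ℝ),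
        ContDiff ℝ 2 F → ConvexOn ℝ (Set.Ici 0) F → F 0 = 0 → deriv F 0 = 0 →
        (∀ B, Φ B = F (frob B)) →
        (∀ B C : Fin n → Fin n → ℝ, (∀ i j, B i j = B j i) → (∀ i j, C i j = C j i) →
          γ₁ * (1 + frob B ^ 2) ^ ((p - 2) / 2) * frob C ^ 2 ≤
            fderiv ℝ (fun A => fderiv ℝ Φ A C) B C) →
        ∀ B : Fin n → Fin n → ℝ, (∀ i j, B i j = B j i) →
          c₁ * γ₁ * (1 + frob B ^ 2) ^ ((p - 2) / 2) * frob B ^ 2 ≤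
            ∑ i, ∑ j, stress F B i j * B i j := by
  have hp0 : 0 < p := lt_trans one_pos hp
  refine ⟨1/p, by positivity, ?_⟩
  intro γ₁ hγ F Φ hF _hconv _hF00 hdF0 hΦ hyp B _hBsymm
  by_cases hB : B = 0
  · subst hB
    have h0 : frob (0 : Fin n → Fin n → ℝ) = 0 := by
      simp [frob]
    simp [stress, h0]
  · rcases Nat.eq_zero_or_pos n with hn | hn
    · exfalso; apply hB; subst hn; funext i j; exact i.elim0
    have hr : 0 < frob B := frob_pos hB
    have hdd := bridge hn p γ₁ F Φ hF hΦ hyp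
    have hkey := keyF p γ₁ hp hγ F hF hdF0 hdd (frob B) (le_of_lt hr)
    have hsum : ∑ i, ∑ j, stress F B i j * B i j
        = (deriv F (frob B) / frob B) * frob B ^ 2 := by
      unfold stress
      rw [if_neg hB, frob_sq]
      rw [Finset.mul_sum]
      apply Finset.sum_congr rfl
      intro i _
      rw [Finset.mul_sum]
      apply Finset.sum_congr rfl
      intro j _
      simp [Pi.smul_apply]
      ring
    rw [hsum]
    have hrr : (deriv F (frob B) / frob B) * frob B ^ 2 = deriv F (frob B) * frob B := by
      field_simp
    rw [hrr]
    calc (1/p) * γ₁ * (1 + frob B ^ 2) ^ ((p - 2) / 2) * frob B ^ 2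
        = ((1/p) * γ₁ * (1 + frob B ^ 2) ^ ((p - 2) / 2) * frob B) * frob B := by ring
      _ ≤ deriv F (frob B) * frob B := mul_le_mul_of_nonneg_right hkey (le_of_lt hr)
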